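/- For every integer k ≥ 2, 2^{3k} divides C(2^{k+1}, 2^k) − C(2^k, 2^{k−1}), but 2^{3k+1} does not divide it. -/

import Mathlib

open Finset Nat
open Finset Nat

/-- Product of first n odd numbers. -/
def Dodd (n : ℕ) : ℕ := ∏ i ∈ range n, (2 * i + 1)

lemma Dodd_odd (n : ℕ) : Odd (Dodd n) := by
  rw [Nat.odd_iff, Dodd, Finset.prod_nat_mod]
  simp [Nat.mul_mod, Nat.add_mod]

lemma fact_two_mul (n : ℕ) : (2 * n)! = 2 ^ n * n ! * Dodd n := by
  induction n with
  | zero => simp [Dodd]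
  | succ n ih =>
    have h : 2 * (n + 1) = (2 * n + 1) + 1 := by ring
    rw [h, Nat.factorial_succ, Nat.factorial_succ, ih, Nat.factorial_succ]
    unfold Dodd
    rw [Finset.prod_range_succ]
    ring

lemma choose_two_mul (m : ℕ) : Nat.choose (2 * m) m * m ! = 2 ^ m * Dodd m := by
  have h := Nat.choose_mul_factorial_mul_factorial (show m ≤ 2 * m by omega)
  have h2 : 2 * m - m = m := by omega
  rw [h2] at h
  have := fact_two_mul m
  have hpos : 0 < m ! := Nat.factorial_pos m
  have : Nat.choose (2 * m) m * m ! * m ! = 2 ^ m * Dodd m * m ! := by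
    rw [h, fact_two_mul]; ring
  exact Nat.eq_of_mul_eq_mul_right hpos this

lemma choose_four_mul (m : ℕ) (hm : 0 < m) :
    Nat.choose (4 * m) (2 * m) * m ! = 2 ^ m * ∏ i ∈ range m, (2 * m + (2 * i + 1)) := by
  have h := Nat.choose_mul_factorial_mul_factorial (show 2 * m ≤ 4 * m by omega)
  have h2 : 4 * m - 2 * m = 2 * m := by omega
  rw [h2] at h
  have h4 : (4 * m)! = 2 ^ (2 * m) * (2 * m)! * Dodd (2 * m) := by
    have := fact_two_mul (2 * m); rw [show 2 * (2 * m) = 4 * m by ring] at this; exact this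
  have hD : Dodd (2 * m) = Dodd m * ∏ i ∈ range m, (2 * m + (2 * i + 1)) := by
    unfold Dodd
    rw [show 2 * m = m + m by ring, Finset.prod_range_add]
    congr 1
    apply Finset.prod_congr rfl
    intro i _
    ring
  -- choose (4m) (2m) * (2m)! * (2m)! = 2^{2m} (2m)! Dodd(2m)
  have key : Nat.choose (4 * m) (2 * m) * (2 * m)! = 2 ^ (2 * m) * Dodd (2 * m) := by
    have hpos : 0 < (2 * m)! := Nat.factorial_pos _
    apply Nat.eq_of_mul_eq_mul_right hpos
    calc Nat.choose (4 * m) (2 * m) * (2 * m)! * (2 * m)!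
        = (4 * m)! := h
      _ = 2 ^ (2 * m) * Dodd (2 * m) * (2 * m)! := by rw [h4]; ring
  -- substitute (2m)! = 2^m m! Dodd m
  have hf : (2 * m)! = 2 ^ m * m ! * Dodd m := fact_two_mul m
  rw [hf, hD] at key
  have hDpos : 0 < Dodd m := (Dodd_odd m).pos
  have h2pos : 0 < 2 ^ m := by positivity
  apply Nat.eq_of_mul_eq_mul_right hDpos
  apply Nat.eq_of_mul_eq_mul_right h2pos
  calc Nat.choose (4 * m) (2 * m) * m ! * Dodd m * 2 ^ m
      = Nat.choose (4 * m) (2 * m) * (2 ^ m * m ! * Dodd m) := by ring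
    _ = 2 ^ (2 * m) * (Dodd m * ∏ i ∈ range m, (2 * m + (2 * i + 1))) := key
    _ = 2 ^ m * (∏ i ∈ range m, (2 * m + (2 * i + 1))) * Dodd m * 2 ^ m := by
        rw [show 2 * m = m + m by ring, pow_add]; ring

lemma fact_two_pow (j : ℕ) : ∃ r : ℕ, Odd r ∧ (2 ^ j)! = 2 ^ (2 ^ j - 1) * r := by
  induction j with
  | zero => exact ⟨1, odd_one, by simp⟩
  | succ j ih =>
    obtain ⟨r, hr, hfr⟩ := ih
    refine ⟨r * Dodd (2 ^ j), hr.mul (Dodd_odd _), ?_⟩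
    have h := fact_two_mul (2 ^ j)
    rw [show 2 * 2 ^ j = 2 ^ (j + 1) by ring] at h
    rw [h, hfr]
    have h1 : 2 ^ j + (2 ^ j - 1) = 2 ^ (j + 1) - 1 := by
      have : 0 < 2 ^ j := by positivity
      omega
    rw [← h1, pow_add]
    ring

/-- Expansion of a product ∏ (x i - c) modulo c^2. -/
lemma prod_sub_expand {ι : Type*} [DecidableEq ι] (s : Finset ι) (x : ι → ℤ) (c : ℤ) :
    ∃ g : ℤ, ∏ i ∈ s, (x i - c) =
      (∏ i ∈ s, x i) - c * (∑ i ∈ s, ∏ j ∈ s.erase i, x j) + c ^ 2 * g := by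
  induction s using Finset.induction_on with
  | empty => exact ⟨0, by simp⟩
  | @insert a s ha ih =>
    obtain ⟨g, hg⟩ := ih
    refine ⟨x a * g + (∑ i ∈ s, ∏ j ∈ s.erase i, x j) - c * g, ?_⟩
    rw [Finset.prod_insert ha, hg, Finset.prod_insert ha, Finset.sum_insert ha,
      Finset.erase_insert ha]
    have hsum : ∑ i ∈ s, ∏ j ∈ (insert a s).erase i, x j
        = x a * ∑ i ∈ s, ∏ j ∈ s.erase i, x j := by
      rw [Finset.mul_sum]
      apply Finset.sum_congr rfl
      intro i hi
      have hne : a ≠ i := fun h => ha (h ▸ hi)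
      rw [Finset.erase_insert_of_ne hne, Finset.prod_insert (fun h => ha (Finset.mem_of_mem_erase h))]
    rw [hsum]
    ring

lemma sum_odd_sq (m : ℕ) : 3 * (∑ i ∈ range m, (2 * i + 1) ^ 2) + m = 4 * m ^ 3 := by
  induction m with
  | zero => simp
  | succ m ih =>
    rw [Finset.sum_range_succ]
    nlinarith [ih]

-- nlinarith/omega may not handle cubes; test

lemma sum_odd_sq_pow (k : ℕ) (hk : 2 ≤ k) :
    ∃ s' : ℕ, Odd s' ∧ ∑ i ∈ range (2 ^ (k - 1)), (2 * i + 1) ^ 2 = 2 ^ (k - 1) * s' := by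
  set S := ∑ i ∈ range (2 ^ (k - 1)), (2 * i + 1) ^ 2 with hS
  have h := sum_odd_sq (2 ^ (k - 1))
  have hm : 4 * (2 ^ (k - 1)) ^ 3 = 2 ^ (k - 1) * 2 ^ (2 * k) := by
    rw [← pow_mul, ← pow_add]
    have : 4 = 2 ^ 2 := rfl
    rw [this, ← pow_add]
    congr 1
    omega
  have h3 : 3 * S = 2 ^ (k - 1) * (2 ^ (2 * k) - 1) := by
    have hpos : 1 ≤ 2 ^ (2 * k) := Nat.one_le_two_pow
    rw [Nat.mul_sub_one]
    rw [hm] at h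
    omega
  have hdvd : 2 ^ (k - 1) ∣ S := by
    have h1 : 2 ^ (k - 1) ∣ 3 * S := ⟨2 ^ (2 * k) - 1, h3⟩
    have hcop : Nat.Coprime (2 ^ (k - 1)) 3 := by
      apply Nat.Coprime.pow_left
      norm_num
    exact (Nat.Coprime.dvd_of_dvd_mul_left hcop h1)
  obtain ⟨s', hs'⟩ := hdvd
  refine ⟨s', ?_, hs'⟩
  have h3s : 3 * s' = 2 ^ (2 * k) - 1 := by
    have hpos : 0 < 2 ^ (k - 1) := by positivity
    have : 2 ^ (k - 1) * (3 * s') = 2 ^ (k - 1) * (2 ^ (2 * k) - 1) := by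
      rw [← h3, hs']; ring
    exact Nat.eq_of_mul_eq_mul_left hpos this
  have hodd : Odd (3 * s') := by
    rw [h3s, Nat.odd_sub (Nat.one_le_two_pow)]
    simp [Nat.even_pow]
    omega
  rcases Nat.even_or_odd s' with he | ho
  · exact absurd hodd (by simp [Nat.even_mul, he, parity_simps])
  · exact ho

-- helper: odd multiple of 2^(k-1) mod 2^k
lemma odd_mul_half (k r : ℕ) (hk : 1 ≤ k) (hr : Odd r) :
    ((2 ^ (k - 1) * r : ℕ) : ZMod (2 ^ k)) = ((2 ^ (k - 1) : ℕ) : ZMod (2 ^ k)) := by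
  obtain ⟨a, ha⟩ := hr
  rw [ZMod.natCast_eq_natCast_iff]
  have : 2 ^ (k - 1) * r = a * 2 ^ k + 2 ^ (k - 1) := by
    rw [ha]
    have : 2 ^ k = 2 ^ (k - 1) * 2 := by
      rw [← pow_succ]
      congr 1
      omega
    rw [this]
    ring
  rw [this]
  show (a * 2 ^ k + 2 ^ (k - 1)) % 2 ^ k = 2 ^ (k - 1) % 2 ^ k
  rw [Nat.mul_comm a (2 ^ k), Nat.mul_add_mod]

lemma E_mod (k : ℕ) (hk : 2 ≤ k) :
    ((∑ i ∈ range (2 ^ (k - 1)), ∏ j ∈ (range (2 ^ (k - 1))).erase i, (2 * j + 1) ^ 2 : ℕ) :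
        ZMod (2 ^ k))
      = ((2 ^ (k - 1) : ℕ) : ZMod (2 ^ k)) := by
  haveI : NeZero (2 ^ k) := ⟨by positivity⟩
  set m := 2 ^ (k - 1) with hm
  have h2m : 2 * m = 2 ^ k := by
    rw [hm, ← pow_succ']
    congr 1
    omega
  have hcop : ∀ i : ℕ, Nat.Coprime (2 * i + 1) (2 ^ k) :=
    fun i => Nat.Coprime.pow_right k (Nat.coprime_two_right.mpr ⟨i, by ring⟩)
  set uf : ℕ → (ZMod (2 ^ k))ˣ := fun i => ZMod.unitOfCoprime (2 * i + 1) (hcop i) with huf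
  have hufval : ∀ i, (uf i : ZMod (2 ^ k)) = ((2 * i + 1 : ℕ) : ZMod (2 ^ k)) := fun i => ZMod.coe_unitOfCoprime _ _
  have hinj : Set.InjOn uf (range m) := by
    intro i hi i' hi' h
    simp only [Finset.coe_range, Set.mem_Iio] at hi hi'
    have : ((2 * i + 1 : ℕ) : ZMod (2 ^ k)) = ((2 * i' + 1 : ℕ) : ZMod (2 ^ k)) := by
      rw [← hufval, ← hufval, h]
    rw [ZMod.natCast_eq_natCast_iff] at this
    have h1 : (2 * i + 1) % 2 ^ k = 2 * i + 1 := Nat.mod_eq_of_lt (by omega)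
    have h2 : (2 * i' + 1) % 2 ^ k = 2 * i' + 1 := Nat.mod_eq_of_lt (by omega)
    have := this
    unfold Nat.ModEq at this
    omega
  have hcard : Fintype.card (ZMod (2 ^ k))ˣ = m := by
    rw [ZMod.card_units_eq_totient, Nat.totient_prime_pow Nat.prime_two (by omega : 0 < k)]
    simp [hm]
  have himage : (range m).image uf = Finset.univ := by
    apply Finset.eq_univ_of_card
    rw [Finset.card_image_of_injOn hinj, Finset.card_range, hcard]
  have key : ∀ g : (ZMod (2 ^ k))ˣ → ZMod (2 ^ k), ∑ i ∈ range m, g (uf i) = ∑ u : (ZMod (2 ^ k))ˣ, g u := by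
    intro g
    rw [← himage, Finset.sum_image (fun x hx y hy hxy => hinj hx hy hxy)]
  -- per-term rewrite
  have hterm : ∀ i ∈ range m,
      ((∏ j ∈ (range m).erase i, (2 * j + 1) ^ 2 : ℕ) : ZMod (2 ^ k))
        = ((Dodd m : ℕ) : ZMod (2 ^ k)) ^ 2 * (((uf i)⁻¹ : (ZMod (2 ^ k))ˣ) : ZMod (2 ^ k)) ^ 2 := by
    intro i hi
    have hprod := Finset.prod_erase_mul (range m)
      (fun j => (((2 * j + 1 : ℕ) : ZMod (2 ^ k))) ^ 2) hi
    have hDcast : (∏ j ∈ range m, (((2 * j + 1 : ℕ) : ZMod (2 ^ k))) ^ 2) = ((Dodd m : ℕ) : ZMod (2 ^ k)) ^ 2 := by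
      rw [Dodd]
      push_cast
      rw [← Finset.prod_pow]
    have hunit : (((2 * i + 1 : ℕ) : ZMod (2 ^ k))) ^ 2 * (((uf i)⁻¹ : (ZMod (2 ^ k))ˣ) : ZMod (2 ^ k)) ^ 2 = 1 := by
      rw [← hufval, ← mul_pow, Units.mul_inv, one_pow]
    calc ((∏ j ∈ (range m).erase i, (2 * j + 1) ^ 2 : ℕ) : ZMod (2 ^ k))
        = ∏ j ∈ (range m).erase i, (((2 * j + 1 : ℕ) : ZMod (2 ^ k))) ^ 2 := by push_cast; ring
      _ = (∏ j ∈ (range m).erase i, (((2 * j + 1 : ℕ) : ZMod (2 ^ k))) ^ 2)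
            * ((((2 * i + 1 : ℕ) : ZMod (2 ^ k))) ^ 2 * (((uf i)⁻¹ : (ZMod (2 ^ k))ˣ) : ZMod (2 ^ k)) ^ 2) := by
          rw [hunit, mul_one]
      _ = (∏ j ∈ range m, (((2 * j + 1 : ℕ) : ZMod (2 ^ k))) ^ 2) * (((uf i)⁻¹ : (ZMod (2 ^ k))ˣ) : ZMod (2 ^ k)) ^ 2 := by
          rw [← mul_assoc, hprod]
      _ = ((Dodd m : ℕ) : ZMod (2 ^ k)) ^ 2 * (((uf i)⁻¹ : (ZMod (2 ^ k))ˣ) : ZMod (2 ^ k)) ^ 2 := by rw [hDcast]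
  -- sum over inverses equals sum over units
  have hinvsum : ∑ i ∈ range m, (((uf i)⁻¹ : (ZMod (2 ^ k))ˣ) : ZMod (2 ^ k)) ^ 2
      = ∑ i ∈ range m, (((2 * i + 1 : ℕ)) : ZMod (2 ^ k)) ^ 2 := by
    rw [key (fun u => ((u⁻¹ : (ZMod (2 ^ k))ˣ) : ZMod (2 ^ k)) ^ 2)]
    rw [show ∑ u : (ZMod (2 ^ k))ˣ, ((u⁻¹ : (ZMod (2 ^ k))ˣ) : ZMod (2 ^ k)) ^ 2 = ∑ u : (ZMod (2 ^ k))ˣ, ((u : (ZMod (2 ^ k))ˣ) : ZMod (2 ^ k)) ^ 2 from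
      Fintype.sum_equiv (Equiv.inv (ZMod (2 ^ k))ˣ) _ _ (fun u => rfl)]
    rw [← key (fun u => ((u : (ZMod (2 ^ k))ˣ) : ZMod (2 ^ k)) ^ 2)]
    exact Finset.sum_congr rfl (fun i _ => by rw [hufval])
  obtain ⟨s', hs'odd, hs'⟩ := sum_odd_sq_pow k hk
  calc ((∑ i ∈ range m, ∏ j ∈ (range m).erase i, (2 * j + 1) ^ 2 : ℕ) : ZMod (2 ^ k))
      = ∑ i ∈ range m, ((∏ j ∈ (range m).erase i, (2 * j + 1) ^ 2 : ℕ) : ZMod (2 ^ k)) := by push_cast; ring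
    _ = ∑ i ∈ range m, ((Dodd m : ℕ) : ZMod (2 ^ k)) ^ 2 * (((uf i)⁻¹ : (ZMod (2 ^ k))ˣ) : ZMod (2 ^ k)) ^ 2 :=
        Finset.sum_congr rfl hterm
    _ = ((Dodd m : ℕ) : ZMod (2 ^ k)) ^ 2 * ∑ i ∈ range m, (((uf i)⁻¹ : (ZMod (2 ^ k))ˣ) : ZMod (2 ^ k)) ^ 2 := by
        rw [Finset.mul_sum]
    _ = ((Dodd m : ℕ) : ZMod (2 ^ k)) ^ 2 * ∑ i ∈ range m, (((2 * i + 1 : ℕ)) : ZMod (2 ^ k)) ^ 2 := by rw [hinvsum]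
    _ = ((Dodd m : ℕ) : ZMod (2 ^ k)) ^ 2 * ((∑ i ∈ range m, (2 * i + 1) ^ 2 : ℕ) : ZMod (2 ^ k)) := by push_cast; ring
    _ = ((2 ^ (k - 1) * (s' * Dodd m ^ 2) : ℕ) : ZMod (2 ^ k)) := by
        rw [hs']
        push_cast
        ring
    _ = ((2 ^ (k - 1) : ℕ) : ZMod (2 ^ k)) := odd_mul_half k _ (by omega) (hs'odd.mul ((Dodd_odd m).pow))

lemma delta_core (k : ℕ) (hk : 2 ≤ k) :
    ∃ δ : ℤ, Odd δ ∧
      ((∏ i ∈ range (2 ^ (k - 1)), (2 * 2 ^ (k - 1) + (2 * i + 1)) : ℕ) : ℤ)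
          - ((Dodd (2 ^ (k - 1)) : ℕ) : ℤ)
        = 2 ^ (3 * k - 1) * δ := by
  set m := 2 ^ (k - 1) with hm
  have h2m : 2 * m = 2 ^ k := by
    rw [hm, ← pow_succ']
    congr 1
    omega
  have hmpos : 2 ≤ m := by
    rw [hm]
    calc 2 = 2 ^ 1 := rfl
    _ ≤ 2 ^ (k - 1) := Nat.pow_le_pow_right (by norm_num) (by omega)
  set A : ℤ := ((∏ i ∈ range m, (2 * m + (2 * i + 1)) : ℕ) : ℤ) with hA
  set B : ℤ := ((Dodd m : ℕ) : ℤ) with hB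
  have hBodd : Odd B := by
    rw [hB, Int.odd_coe_nat]
    exact Dodd_odd m
  -- reflection: ∏ (2m - (2i+1)) = B
  have hrefl : ∏ i ∈ range m, ((2 * m : ℤ) - (2 * i + 1)) = B := by
    rw [hB, Dodd]
    push_cast
    rw [← Finset.prod_range_reflect (fun i => ((2 * m : ℤ) - (2 * (i : ℕ) + 1)))]
    apply Finset.prod_congr rfl
    intro j hj
    rw [Finset.mem_range] at hj
    have hcast : ((m - 1 - j : ℕ) : ℤ) = (m : ℤ) - 1 - j := by omega
    rw [hcast]
    ring
  -- A as an integer product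
  have hAprod : A = ∏ i ∈ range m, ((2 * m : ℤ) + (2 * i + 1)) := by
    rw [hA]
    push_cast
    rfl
  -- key product identity
  have hABprod : A * B = ∏ i ∈ range m, (((2 * i + 1 : ℤ)) ^ 2 - ((2 * m : ℤ)) ^ 2) := by
    have heven : Even m := by
      rw [hm]
      exact (Nat.even_pow).mpr ⟨even_two, by omega⟩
    calc A * B = (∏ i ∈ range m, ((2 * m : ℤ) + (2 * i + 1)))
          * ∏ i ∈ range m, ((2 * m : ℤ) - (2 * i + 1)) := by rw [hAprod, hrefl]
      _ = ∏ i ∈ range m, (((2 * m : ℤ) + (2 * i + 1)) * ((2 * m : ℤ) - (2 * i + 1))) := by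
          rw [Finset.prod_mul_distrib]
      _ = ∏ i ∈ range m, ((-1 : ℤ) * (((2 * i + 1 : ℤ)) ^ 2 - ((2 * m : ℤ)) ^ 2)) := by
          apply Finset.prod_congr rfl
          intro i _
          ring
      _ = (-1) ^ m * ∏ i ∈ range m, (((2 * i + 1 : ℤ)) ^ 2 - ((2 * m : ℤ)) ^ 2) := by
          rw [Finset.prod_mul_distrib, Finset.prod_const, Finset.card_range]
      _ = ∏ i ∈ range m, (((2 * i + 1 : ℤ)) ^ 2 - ((2 * m : ℤ)) ^ 2) := by
          rw [heven.neg_one_pow, one_mul]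
  -- expansion of the product
  obtain ⟨g, hg⟩ := prod_sub_expand (range m) (fun i => ((2 * i + 1 : ℤ)) ^ 2) (((2 * m : ℤ)) ^ 2)
  -- B^2 = ∏ squares
  have hB2 : ∏ i ∈ range m, ((2 * i + 1 : ℤ)) ^ 2 = B ^ 2 := by
    rw [hB, Dodd]
    push_cast
    rw [← Finset.prod_pow]
  -- E value
  have hEcast : ((∑ i ∈ range m, ∏ j ∈ (range m).erase i, (2 * j + 1) ^ 2 : ℕ) : ℤ)
      = ∑ i ∈ range m, ∏ j ∈ (range m).erase i, ((2 * j + 1 : ℤ)) ^ 2 := by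
    push_cast
    rfl
  have hE := E_mod k hk
  rw [ZMod.natCast_eq_natCast_iff] at hE
  obtain ⟨t, ht⟩ : ∃ t : ℤ, (∑ i ∈ range m, ∏ j ∈ (range m).erase i, ((2 * j + 1 : ℤ)) ^ 2)
      = 2 ^ (k - 1) + 2 ^ k * t := by
    obtain ⟨t0, ht0⟩ := hE.dvd
    push_cast at ht0
    refine ⟨-t0, ?_⟩
    rw [← hEcast]
    push_cast
    linarith
  -- (2m)^2 = 2^(2k)
  have hc2 : ((2 * m : ℤ)) ^ 2 = 2 ^ (2 * k) := by
    have : ((2 * m : ℕ) : ℤ) = 2 * (m : ℤ) := by push_cast; ring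
    rw [← this, h2m]
    push_cast
    rw [← pow_mul, Nat.mul_comm]
  -- assemble: (A - B) * B = -2^(2k) * E + 2^(4k) * g
  have hmain : (A - B) * B = 2 ^ (3 * k - 1) * (-1 - 2 * t + 2 ^ (k + 1) * g) := by
    have e1 : (2 : ℤ) ^ (2 * k) * 2 ^ (k - 1) = 2 ^ (3 * k - 1) := by
      rw [← pow_add]; congr 1; omega
    have e2 : (2 : ℤ) ^ (2 * k) * 2 ^ k = 2 ^ (3 * k - 1) * 2 := by
      rw [← pow_add, ← pow_succ]; congr 1; omega
    have e3 : ((2 : ℤ) ^ (2 * k)) ^ 2 = 2 ^ (3 * k - 1) * 2 ^ (k + 1) := by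
      rw [← pow_mul, ← pow_add]; congr 1; omega
    calc (A - B) * B = A * B - B ^ 2 := by ring
      _ = (∏ i ∈ range m, ((2 * i + 1 : ℤ)) ^ 2)
            - ((2 * m : ℤ)) ^ 2 * (∑ i ∈ range m, ∏ j ∈ (range m).erase i, ((2 * j + 1 : ℤ)) ^ 2)
            + (((2 * m : ℤ)) ^ 2) ^ 2 * g - B ^ 2 := by rw [hABprod, hg]
      _ = - (((2 * m : ℤ)) ^ 2 * (2 ^ (k - 1) + 2 ^ k * t)) + (((2 * m : ℤ)) ^ 2) ^ 2 * g := by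
          rw [hB2, ht]; ring
      _ = - (2 ^ (2 * k) * 2 ^ (k - 1)) - (2 ^ (2 * k) * 2 ^ k) * t
            + ((2 : ℤ) ^ (2 * k)) ^ 2 * g := by rw [hc2]; ring
      _ = 2 ^ (3 * k - 1) * (-1 - 2 * t + 2 ^ (k + 1) * g) := by rw [e1, e2, e3]; ring
  -- cancel B
  have hcop : IsCoprime ((2 : ℤ) ^ (3 * k - 1)) B := by
    apply IsCoprime.pow_left
    obtain ⟨n, hn⟩ := hBodd
    exact ⟨-n, 1, by rw [hn]; ring⟩
  have hdvd : (2 : ℤ) ^ (3 * k - 1) ∣ (A - B) := by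
    apply hcop.dvd_of_dvd_mul_right
    exact ⟨_, hmain⟩
  obtain ⟨δ, hδ⟩ := hdvd
  refine ⟨δ, ?_, hδ⟩
  have hcancel : δ * B = -1 - 2 * t + 2 ^ (k + 1) * g := by
    have h2ne : ((2 : ℤ) ^ (3 * k - 1)) ≠ 0 := by positivity
    apply mul_left_cancel₀ h2ne
    rw [← mul_assoc, ← hδ, hmain]
  have hodd : Odd (δ * B) := by
    rw [hcancel]
    refine ⟨-t + 2 ^ k * g - 1, ?_⟩
    have : (2 : ℤ) ^ (k + 1) = 2 * 2 ^ k := by rw [pow_succ]; ring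
    rw [this]
    ring
  exact (Int.odd_mul.mp hodd).1

theorem imo2006_N4 (k : ℕ) (hk : 2 ≤ k) :
    (2 : ℤ) ^ (3 * k) ∣
      ((Nat.choose (2 ^ (k + 1)) (2 ^ k) : ℤ) - (Nat.choose (2 ^ k) (2 ^ (k - 1)) : ℤ)) ∧
    ¬ (2 : ℤ) ^ (3 * k + 1) ∣
      ((Nat.choose (2 ^ (k + 1)) (2 ^ k) : ℤ) - (Nat.choose (2 ^ k) (2 ^ (k - 1)) : ℤ)) := by
  have h2m : 2 * 2 ^ (k - 1) = 2 ^ k := by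
    rw [← pow_succ']
    congr 1
    omega
  have h4m : 4 * 2 ^ (k - 1) = 2 ^ (k + 1) := by
    rw [show (4 : ℕ) = 2 ^ 2 from rfl, ← pow_add]
    congr 1
    omega
  have hmpos : 0 < 2 ^ (k - 1) := by positivity
  have hM1 : 1 ≤ 2 ^ (k - 1) := hmpos
  have hc1 := choose_four_mul (2 ^ (k - 1)) hmpos
  rw [h4m, h2m] at hc1
  have hc2 := choose_two_mul (2 ^ (k - 1))
  rw [h2m] at hc2
  obtain ⟨δ, hδodd, hδ⟩ := delta_core k hk
  rw [h2m] at hδ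
  obtain ⟨r, hrodd, hfact⟩ := fact_two_pow (k - 1)
  set diff : ℤ :=
    ((Nat.choose (2 ^ (k + 1)) (2 ^ k) : ℤ) - (Nat.choose (2 ^ k) (2 ^ (k - 1)) : ℤ)) with hdiff
  -- diff * (m !) = 2^m * (A - B)
  have h1 : ((Nat.choose (2 ^ (k + 1)) (2 ^ k) : ℤ)) * (((2 ^ (k - 1))! : ℕ) : ℤ)
      = 2 ^ (2 ^ (k - 1)) *
        ((∏ i ∈ range (2 ^ (k - 1)), (2 ^ k + (2 * i + 1)) : ℕ) : ℤ) := by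
    exact_mod_cast congrArg (fun x : ℕ => (x : ℤ)) hc1
  have h2 : ((Nat.choose (2 ^ k) (2 ^ (k - 1)) : ℤ)) * (((2 ^ (k - 1))! : ℕ) : ℤ)
      = 2 ^ (2 ^ (k - 1)) * ((Dodd (2 ^ (k - 1)) : ℕ) : ℤ) := by
    exact_mod_cast congrArg (fun x : ℕ => (x : ℤ)) hc2
  have hmain : diff * (((2 ^ (k - 1))! : ℕ) : ℤ)
      = 2 ^ (2 ^ (k - 1)) * (2 ^ (3 * k - 1) * δ) := by
    rw [hdiff, sub_mul, h1, h2, ← mul_sub, hδ]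
  -- substitute factorial
  have hfactZ : (((2 ^ (k - 1))! : ℕ) : ℤ) = 2 ^ (2 ^ (k - 1) - 1) * (r : ℤ) := by
    exact_mod_cast congrArg (fun x : ℕ => (x : ℤ)) hfact
  have hpow : (2 : ℤ) ^ (2 ^ (k - 1)) * 2 ^ (3 * k - 1) = 2 ^ (2 ^ (k - 1) - 1) * 2 ^ (3 * k) := by
    rw [← pow_add, ← pow_add]
    congr 1
    omega
  have hkey : diff * (r : ℤ) = 2 ^ (3 * k) * δ := by
    have hne : ((2 : ℤ) ^ (2 ^ (k - 1) - 1)) ≠ 0 := by positivity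
    apply mul_left_cancel₀ hne
    calc (2 : ℤ) ^ (2 ^ (k - 1) - 1) * (diff * (r : ℤ))
        = diff * ((2 : ℤ) ^ (2 ^ (k - 1) - 1) * (r : ℤ)) := by ring
      _ = diff * (((2 ^ (k - 1))! : ℕ) : ℤ) := by rw [hfactZ]
      _ = 2 ^ (2 ^ (k - 1)) * (2 ^ (3 * k - 1) * δ) := hmain
      _ = (2 ^ (2 ^ (k - 1)) * 2 ^ (3 * k - 1)) * δ := by ring
      _ = 2 ^ (2 ^ (k - 1) - 1) * (2 ^ (3 * k) * δ) := by rw [hpow]; ring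
  have hroddZ : Odd ((r : ℕ) : ℤ) := by exact_mod_cast hrodd
  obtain ⟨n, hn⟩ := hroddZ
  have hcop : IsCoprime ((2 : ℤ) ^ (3 * k)) ((r : ℕ) : ℤ) := by
    apply IsCoprime.pow_left
    exact ⟨-n, 1, by rw [hn]; ring⟩
  constructor
  · exact hcop.dvd_of_dvd_mul_right ⟨δ, hkey⟩
  · rintro ⟨q, hq⟩
    have h2qr : 2 * q * (r : ℤ) = δ := by
      have hne : ((2 : ℤ) ^ (3 * k)) ≠ 0 := by positivity
      apply mul_left_cancel₀ hne
      calc (2 : ℤ) ^ (3 * k) * (2 * q * (r : ℤ))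
          = (2 ^ (3 * k) * 2) * q * (r : ℤ) := by ring
        _ = 2 ^ (3 * k + 1) * q * (r : ℤ) := by rw [pow_succ]
        _ = diff * (r : ℤ) := by rw [← hq]
        _ = 2 ^ (3 * k) * δ := hkey
    have : Even δ := ⟨q * (r : ℤ), by rw [← h2qr]; ring⟩
    exact (Int.not_even_iff_odd.mpr hδodd) this
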